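/- Let g : Q → E* be an operator that is ν-Hölder continuous, i.e. ‖g(x) − g(y)‖_* ≤ L_ν ‖x − y‖^ν for all x, y ∈ Q, with ν ∈ [0,1]. Then for every δ > 0 and all x, y, z ∈ Q, ⟨g(z) − g(y), z − x⟩ ≤ (L(δ)/2)‖z − x‖² + (L(δ)/2)‖z − y‖² + δ, where L(δ) = (1/(2δ))^{(1−ν)/(1+ν)} · L_ν^{2/(1+ν)}. -/
import Mathlib


open RealInnerProductSpace

lemma young_key (ν Lν δ a b : ℝ) (hν0 : 0 ≤ ν) (hν1 : ν ≤ 1) (hLν : 0 < Lν)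
    (hδ : 0 < δ) (ha : 0 ≤ a) (hb : 0 ≤ b) :
    Lν * a ^ ν * b ≤
      (1 / (2 * δ)) ^ ((1 - ν) / (1 + ν)) * Lν ^ ((2 : ℝ) / (1 + ν)) / 2 * b ^ 2
      + (1 / (2 * δ)) ^ ((1 - ν) / (1 + ν)) * Lν ^ ((2 : ℝ) / (1 + ν)) / 2 * a ^ 2 + δ := by
  have h1ν : (0:ℝ) < 1 + ν := by linarith
  have h2δ : (0:ℝ) < 2 * δ := by linarith
  set L : ℝ := (1 / (2 * δ)) ^ ((1 - ν) / (1 + ν)) * Lν ^ ((2 : ℝ) / (1 + ν)) with hLdef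
  have hL : 0 < L := by positivity
  have hc : (1 - ν) / (1 + ν) * (1 + ν) = 1 - ν := by field_simp
  have hc2 : (2:ℝ) / (1 + ν) * (1 + ν) = 2 := by field_simp
  have hid : L ^ (1 + ν) * (2 * δ) ^ (1 - ν) = Lν ^ (2:ℝ) := by
    rw [hLdef, Real.mul_rpow (by positivity) (by positivity),
      ← Real.rpow_mul (by positivity), ← Real.rpow_mul hLν.le, hc, hc2,
      one_div, Real.inv_rpow h2δ.le]
    field_simp
  have hgeom : (L * a ^ 2) ^ ν * (2 * δ) ^ (1 - ν)
      ≤ ν * (L * a ^ 2) + (1 - ν) * (2 * δ) :=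
    Real.geom_mean_le_arith_mean2_weighted hν0 (by linarith) (by positivity)
      (by positivity) (by ring)
  have e0 : (a ^ ν) ^ 2 = (a ^ 2 : ℝ) ^ ν := by
    rw [← Real.rpow_natCast (a ^ ν) 2, ← Real.rpow_natCast a 2,
      ← Real.rpow_mul ha, ← Real.rpow_mul ha]
    norm_num [mul_comm]
  have e1 : (Lν * a ^ ν) ^ 2 = L * ((L * a ^ 2) ^ ν * (2 * δ) ^ (1 - ν)) := by
    have hmul : (L * a ^ 2) ^ ν = L ^ ν * (a ^ 2 : ℝ) ^ ν :=
      Real.mul_rpow hL.le (by positivity)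
    have hLsplit : L ^ (1 + ν) = L * L ^ ν := by
      rw [Real.rpow_add hL, Real.rpow_one]
    have h2 : (Lν : ℝ) ^ (2:ℝ) = Lν ^ 2 := by
      rw [← Real.rpow_natCast Lν 2]; norm_num
    calc (Lν * a ^ ν) ^ 2 = Lν ^ 2 * (a ^ ν) ^ 2 := by ring
      _ = L ^ (1 + ν) * (2 * δ) ^ (1 - ν) * (a ^ 2 : ℝ) ^ ν := by
          rw [hid, h2, e0]
      _ = L * ((L * a ^ 2) ^ ν * (2 * δ) ^ (1 - ν)) := by
          rw [hmul, hLsplit]; ring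
  have key2 : (Lν * a ^ ν) ^ 2 ≤ L * (L * a ^ 2) + L * (2 * δ) := by
    rw [e1]
    calc L * ((L * a ^ 2) ^ ν * (2 * δ) ^ (1 - ν))
        ≤ L * (ν * (L * a ^ 2) + (1 - ν) * (2 * δ)) :=
          mul_le_mul_of_nonneg_left hgeom hL.le
      _ ≤ L * (L * a ^ 2) + L * (2 * δ) := by
          nlinarith [mul_nonneg (mul_nonneg (sub_nonneg.mpr hν1) hL.le)
              (mul_nonneg hL.le (sq_nonneg a)),
            mul_nonneg (mul_nonneg hν0 hL.le) h2δ.le]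
  -- combine: 2*L*(Lν a^ν b) ≤ (Lν a^ν)^2 + L^2 b^2 ≤ L^2 a^2 + 2Lδ + L^2 b^2
  have hsq : 0 ≤ (Lν * a ^ ν - L * b) ^ 2 := sq_nonneg _
  have h2L : 2 * L * (Lν * a ^ ν * b) ≤ L ^ 2 * b ^ 2 + L ^ 2 * a ^ 2 + 2 * L * δ := by
    nlinarith [key2, hsq]
  nlinarith [h2L, hL]

/-- Hölder interpolation inequality for a `ν`-Hölder continuous operator:
for every `δ > 0`, `⟪g z - g y, z - x⟫ ≤ (L(δ)/2)‖z - x‖² + (L(δ)/2)‖z - y‖² + δ`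
with `L(δ) = (1/(2δ))^((1-ν)/(1+ν)) · Lν^(2/(1+ν))`. -/
theorem holder_interpolation
    {E : Type*} [NormedAddCommGroup E] [InnerProductSpace ℝ E]
    (Q : Set E) (g : E → E) (ν Lν : ℝ) (hν : ν ∈ Set.Icc (0 : ℝ) 1) (hLν : 0 < Lν)
    (hhold : ∀ x ∈ Q, ∀ y ∈ Q, ‖g x - g y‖ ≤ Lν * ‖x - y‖ ^ ν) :
    ∀ δ > (0 : ℝ), ∀ x ∈ Q, ∀ y ∈ Q, ∀ z ∈ Q,
      ⟪g z - g y, z - x⟫ ≤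
        (1 / (2 * δ)) ^ ((1 - ν) / (1 + ν)) * Lν ^ ((2 : ℝ) / (1 + ν)) / 2 * ‖z - x‖ ^ 2
        + (1 / (2 * δ)) ^ ((1 - ν) / (1 + ν)) * Lν ^ ((2 : ℝ) / (1 + ν)) / 2 * ‖z - y‖ ^ 2
        + δ := by
  intro δ hδ x hx y hy z hz
  calc ⟪g z - g y, z - x⟫ ≤ ‖g z - g y‖ * ‖z - x‖ := real_inner_le_norm _ _
    _ ≤ Lν * ‖z - y‖ ^ ν * ‖z - x‖ :=
        mul_le_mul_of_nonneg_right (hhold z hz y hy) (norm_nonneg _)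
    _ ≤ _ := young_key ν Lν δ ‖z - y‖ ‖z - x‖ hν.1 hν.2 hLν hδ
        (norm_nonneg _) (norm_nonneg _)
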